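/- arXiv:cs/0611129 — 2 statements merged into one kernel-verified Lean document; each statement's English description precedes it below -/
import Mathlib

section
/- Let U, V, W, K, Z be finite-valued random variables such that V is conditionally independent of (Z,K) given (U,W). Then I(U; (V,K) | (W,Z)) ≤ H(K) + I(U;V|W). -/
open scoped BigOperators

/-- The probability that a random variable `X` on the finite probability space `(Ω, μ)`
takes the value `a`. -/
noncomputable def prob {Ω α : Type} [Fintype Ω] [DecidableEq α]
    (μ : Ω → ℝ) (X : Ω → α) (a : α) : ℝ :=
  ∑ ω, if X ω = a then μ ω else 0

/-- Shannon entropy (natural logarithm) of `X`. -/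
noncomputable def entH {Ω α : Type} [Fintype Ω] [Fintype α] [DecidableEq α]
    (μ : Ω → ℝ) (X : Ω → α) : ℝ :=
  -∑ a, prob μ X a * Real.log (prob μ X a)

/-- Conditional entropy `H(X|Y) = H(X,Y) - H(Y)`. -/
noncomputable def condH {Ω α β : Type} [Fintype Ω] [Fintype α] [DecidableEq α]
    [Fintype β] [DecidableEq β] (μ : Ω → ℝ) (X : Ω → α) (Y : Ω → β) : ℝ :=
  entH μ (fun ω => (X ω, Y ω)) - entH μ Y

/-- Mutual information `I(X;Y) = H(X) + H(Y) - H(X,Y)`. -/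
noncomputable def MI {Ω α β : Type} [Fintype Ω] [Fintype α] [DecidableEq α]
    [Fintype β] [DecidableEq β] (μ : Ω → ℝ) (X : Ω → α) (Y : Ω → β) : ℝ :=
  entH μ X + entH μ Y - entH μ (fun ω => (X ω, Y ω))

/-- Conditional mutual information
`I(X;Y|Z) = H(X,Z) + H(Y,Z) - H(X,Y,Z) - H(Z)`. -/
noncomputable def condMI {Ω α β γ : Type} [Fintype Ω] [Fintype α] [DecidableEq α]
    [Fintype β] [DecidableEq β] [Fintype γ] [DecidableEq γ]
    (μ : Ω → ℝ) (X : Ω → α) (Y : Ω → β) (Z : Ω → γ) : ℝ :=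
  entH μ (fun ω => (X ω, Z ω)) + entH μ (fun ω => (Y ω, Z ω))
    - entH μ (fun ω => (X ω, Y ω, Z ω)) - entH μ Z

/-- `A` is conditionally independent of `B` given `C`:
`P(A=a, B=b | C=c) = P(A=a|C=c)·P(B=b|C=c)` whenever `P(C=c) > 0`
(stated multiplicatively). -/
def CondIndep {Ω α β γ : Type} [Fintype Ω] [DecidableEq α] [DecidableEq β] [DecidableEq γ]
    (μ : Ω → ℝ) (A : Ω → α) (B : Ω → β) (C : Ω → γ) : Prop :=
  ∀ a b c, 0 < prob μ C c →
    prob μ (fun ω => (A ω, B ω, C ω)) (a, b, c) * prob μ C c =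
      prob μ (fun ω => (A ω, C ω)) (a, c) * prob μ (fun ω => (B ω, C ω)) (b, c)

set_option linter.unusedSectionVars false
set_option maxHeartbeats 1000000

section aux1
variable {Ω α β : Type} [Fintype Ω] [Fintype α] [DecidableEq α] [Fintype β] [DecidableEq β]

lemma prob_nonneg (μ : Ω → ℝ) (hμ0 : ∀ ω, 0 ≤ μ ω) (X : Ω → α) (a : α) :
    0 ≤ prob μ X a := by
  apply Finset.sum_nonneg; intro ω _; split <;> simp [hμ0 ω]

lemma sum_prob (μ : Ω → ℝ) (hμ1 : ∑ ω, μ ω = 1) (X : Ω → α) :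
    ∑ a, prob μ X a = 1 := by
  unfold prob; rw [Finset.sum_comm]; simpa using hμ1

lemma prob_comp (μ : Ω → ℝ) (T : Ω → α) (g : α → β) (b : β) :
    prob μ (fun ω => g (T ω)) b = ∑ a, if g a = b then prob μ T a else 0 := by
  unfold prob
  rw [Finset.sum_congr rfl (fun a _ => show (if g a = b then (∑ ω, if T ω = a then μ ω else 0) else 0)
      = ∑ ω, if g a = b then (if T ω = a then μ ω else 0) else 0 from by split <;> simp)]
  rw [Finset.sum_comm]
  refine Finset.sum_congr rfl (fun ω _ => ?_)
  rw [Finset.sum_eq_single (T ω)]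
  · simp
  · intro a _ ha; simp [Ne.symm ha]
  · simp

lemma prob_le_prob_comp (μ : Ω → ℝ) (hμ0 : ∀ ω, 0 ≤ μ ω) (T : Ω → α) (g : α → β) (a : α) :
    prob μ T a ≤ prob μ (fun ω => g (T ω)) (g a) := by
  conv_rhs => rw [prob_comp]
  calc prob μ T a = (if g a = g a then prob μ T a else 0) := by simp
    _ ≤ ∑ a', if g a' = g a then prob μ T a' else 0 :=
        Finset.single_le_sum (f := fun a' => if g a' = g a then prob μ T a' else 0)
          (fun a' _ => by split <;> simp [prob_nonneg μ hμ0]) (Finset.mem_univ a)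

lemma prob_comp_eq_zero (μ : Ω → ℝ) (T : Ω → α) (g : α → β) (b : β)
    (hb : ∀ a, g a ≠ b) : prob μ (fun ω => g (T ω)) b = 0 := by
  rw [prob_comp]; exact Finset.sum_eq_zero (fun a _ => by simp [hb a])

lemma prob_comp_inj (μ : Ω → ℝ) (T : Ω → α) (g : α → β) (hg : Function.Injective g) (a : α) :
    prob μ (fun ω => g (T ω)) (g a) = prob μ T a := by
  rw [prob_comp, Finset.sum_eq_single a]
  · simp
  · intro a' _ ha'; simp only [ite_eq_right_iff]; intro h; exact absurd (hg h) ha'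
  · simp

lemma entH_comp_inj (μ : Ω → ℝ) (T : Ω → α) (g : α → β) (hg : Function.Injective g) :
    entH μ (fun ω => g (T ω)) = entH μ T := by
  unfold entH
  congr 1
  rw [← Finset.sum_subset (Finset.subset_univ (Finset.univ.image g))]
  · rw [Finset.sum_image (fun a _ a' _ h => hg h)]
    exact Finset.sum_congr rfl (fun a _ => by rw [prob_comp_inj μ T g hg])
  · intro b _ hb
    rw [prob_comp_eq_zero μ T g b]
    · simp
    · intro a ha; exact hb (Finset.mem_image.mpr ⟨a, Finset.mem_univ a, ha⟩)

lemma entH_eq_of_inj (μ : Ω → ℝ) (X : Ω → α) (Y : Ω → β) (g : α → β)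
    (hg : Function.Injective g) (h : ∀ ω, Y ω = g (X ω)) : entH μ Y = entH μ X := by
  rw [show Y = fun ω => g (X ω) from funext h]
  exact entH_comp_inj μ X g hg

lemma entH_comp_expand (μ : Ω → ℝ) (T : Ω → α) (g : α → β) :
    entH μ (fun ω => g (T ω))
      = -∑ a, prob μ T a * Real.log (prob μ (fun ω => g (T ω)) (g a)) := by
  unfold entH
  congr 1
  have step : ∀ b, prob μ (fun ω => g (T ω)) b * Real.log (prob μ (fun ω => g (T ω)) b)
      = ∑ a, (if g a = b then prob μ T a else 0) * Real.log (prob μ (fun ω => g (T ω)) b) := by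
    intro b
    nth_rewrite 1 [prob_comp μ T g b]
    rw [Finset.sum_mul]
  rw [Finset.sum_congr rfl (fun b _ => step b), Finset.sum_comm]
  refine Finset.sum_congr rfl (fun a _ => ?_)
  rw [Finset.sum_eq_single (g a)]
  · rw [if_pos rfl]
  · intro b _ hb; rw [if_neg (Ne.symm hb), zero_mul]
  · intro h; exact absurd (Finset.mem_univ (g a)) h

end aux1

section main
variable {Ω α β γ : Type} [Fintype Ω] [Fintype α] [DecidableEq α] [Fintype β] [DecidableEq β]
  [Fintype γ] [DecidableEq γ]
variable (μ : Ω → ℝ) (X : Ω → α) (Y : Ω → β) (Z : Ω → γ)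

lemma condMI_eq_sum :
    condMI μ X Y Z = ∑ a : α × β × γ,
      prob μ (fun ω => (X ω, Y ω, Z ω)) a *
        (Real.log (prob μ (fun ω => (X ω, Y ω, Z ω)) a)
          + Real.log (prob μ Z a.2.2)
          - Real.log (prob μ (fun ω => (X ω, Z ω)) (a.1, a.2.2))
          - Real.log (prob μ (fun ω => (Y ω, Z ω)) (a.2.1, a.2.2))) := by
  have e1 : entH μ (fun ω => (X ω, Z ω)) = -∑ a : α × β × γ,
      prob μ (fun ω => (X ω, Y ω, Z ω)) a *
        Real.log (prob μ (fun ω => (X ω, Z ω)) (a.1, a.2.2)) :=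
    entH_comp_expand μ (fun ω => (X ω, Y ω, Z ω)) (fun a => (a.1, a.2.2))
  have e2 : entH μ (fun ω => (Y ω, Z ω)) = -∑ a : α × β × γ,
      prob μ (fun ω => (X ω, Y ω, Z ω)) a *
        Real.log (prob μ (fun ω => (Y ω, Z ω)) (a.2.1, a.2.2)) :=
    entH_comp_expand μ (fun ω => (X ω, Y ω, Z ω)) (fun a => (a.2.1, a.2.2))
  have e4 : entH μ Z = -∑ a : α × β × γ,
      prob μ (fun ω => (X ω, Y ω, Z ω)) a * Real.log (prob μ Z a.2.2) :=
    entH_comp_expand μ (fun ω => (X ω, Y ω, Z ω)) (fun a => a.2.2)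
  have e3 : entH μ (fun ω => (X ω, Y ω, Z ω)) = -∑ a : α × β × γ,
      prob μ (fun ω => (X ω, Y ω, Z ω)) a *
        Real.log (prob μ (fun ω => (X ω, Y ω, Z ω)) a) := rfl
  unfold condMI
  rw [e1, e2, e3, e4]
  rw [show ∀ A B C D : ℝ, -A + -B - -C - -D = (C + D) - A - B from fun A B C D => by ring]
  simp only [mul_add, mul_sub, Finset.sum_add_distrib, Finset.sum_sub_distrib]
end main

section main2
variable {Ω α β γ : Type} [Fintype Ω] [Fintype α] [DecidableEq α] [Fintype β] [DecidableEq β]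
  [Fintype γ] [DecidableEq γ]
variable (μ : Ω → ℝ) (X : Ω → α) (Y : Ω → β) (Z : Ω → γ)

lemma sum_marg_fst (z : γ) :
    ∑ x, prob μ (fun ω => (X ω, Z ω)) (x, z) = prob μ Z z := by
  have h2 : prob μ Z z
      = ∑ p : α × γ, if p.2 = z then prob μ (fun ω => (X ω, Z ω)) p else 0 :=
    prob_comp μ (fun ω => (X ω, Z ω)) (fun p => p.2) z
  rw [h2, Fintype.sum_prod_type]
  refine Finset.sum_congr rfl fun x _ => ?_
  simp [Finset.sum_ite_eq' Finset.univ z]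

lemma condMI_nonneg (hμ0 : ∀ ω, 0 ≤ μ ω) (hμ1 : ∑ ω, μ ω = 1) :
    0 ≤ condMI μ X Y Z := by
  rw [condMI_eq_sum]
  have hp : ∀ a, 0 ≤ prob μ (fun ω => (X ω, Y ω, Z ω)) a := prob_nonneg μ hμ0 _
  have hr : ∀ a : α × β × γ, prob μ (fun ω => (X ω, Y ω, Z ω)) a
      ≤ prob μ (fun ω => (X ω, Z ω)) (a.1, a.2.2) :=
    prob_le_prob_comp μ hμ0 (fun ω => (X ω, Y ω, Z ω)) (fun a => (a.1, a.2.2))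
  have hs : ∀ a : α × β × γ, prob μ (fun ω => (X ω, Y ω, Z ω)) a
      ≤ prob μ (fun ω => (Y ω, Z ω)) (a.2.1, a.2.2) :=
    prob_le_prob_comp μ hμ0 (fun ω => (X ω, Y ω, Z ω)) (fun a => (a.2.1, a.2.2))
  have ht : ∀ a : α × β × γ, prob μ (fun ω => (X ω, Y ω, Z ω)) a ≤ prob μ Z a.2.2 :=
    prob_le_prob_comp μ hμ0 (fun ω => (X ω, Y ω, Z ω)) (fun a => a.2.2)
  have key : ∀ a ∈ Finset.univ, prob μ (fun ω => (X ω, Y ω, Z ω)) a -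
      (if 0 < prob μ Z a.2.2 then
        prob μ (fun ω => (X ω, Z ω)) (a.1, a.2.2) * prob μ (fun ω => (Y ω, Z ω)) (a.2.1, a.2.2)
          / prob μ Z a.2.2 else 0)
      ≤ prob μ (fun ω => (X ω, Y ω, Z ω)) a *
        (Real.log (prob μ (fun ω => (X ω, Y ω, Z ω)) a)
          + Real.log (prob μ Z a.2.2)
          - Real.log (prob μ (fun ω => (X ω, Z ω)) (a.1, a.2.2))
          - Real.log (prob μ (fun ω => (Y ω, Z ω)) (a.2.1, a.2.2))) := by
    intro a _
    set p := prob μ (fun ω => (X ω, Y ω, Z ω)) a with hpdef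
    set r := prob μ (fun ω => (X ω, Z ω)) (a.1, a.2.2) with hrdef
    set s := prob μ (fun ω => (Y ω, Z ω)) (a.2.1, a.2.2) with hsdef
    set t := prob μ Z a.2.2 with htdef
    rcases eq_or_lt_of_le (hp a) with hp0 | hp0
    · have hp0' : p = 0 := hpdef.trans hp0.symm
      rw [hp0', zero_mul, zero_sub, neg_nonpos]
      split
      · have h0r : (0:ℝ) ≤ r := le_trans (hp a) (hr a)
        have h0s : (0:ℝ) ≤ s := le_trans (hp a) (hs a)
        positivity
      · exact le_refl 0
    · have hp0 : (0:ℝ) < p := hp0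
      have hpr : p ≤ r := hr a
      have hps : p ≤ s := hs a
      have hpt : p ≤ t := ht a
      have htpos : 0 < t := lt_of_lt_of_le hp0 hpt
      rw [if_pos htpos]
      have hrpos : 0 < r := lt_of_lt_of_le hp0 hpr
      have hspos : 0 < s := lt_of_lt_of_le hp0 hps
      have hu : 0 < r * s / (p * t) := by positivity
      have hlog : Real.log (r * s / (p * t)) ≤ r * s / (p * t) - 1 :=
        Real.log_le_sub_one_of_pos hu
      have hlogeq : Real.log (r * s / (p * t))
          = Real.log r + Real.log s - Real.log p - Real.log t := by
        rw [Real.log_div (by positivity) (by positivity),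
          Real.log_mul hrpos.ne' hspos.ne', Real.log_mul hp0.ne' htpos.ne']
        ring
      rw [hlogeq] at hlog
      have h2 : p * (Real.log p + Real.log t - Real.log r - Real.log s)
          ≥ p * (1 - r * s / (p * t)) := by
        apply mul_le_mul_of_nonneg_left _ hp0.le
        nlinarith [hlog]
      have h3 : p * (1 - r * s / (p * t)) = p - r * s / t := by
        field_simp
      linarith [h2, h3.symm.le]
  have hmain := Finset.sum_le_sum key
  rw [Finset.sum_sub_distrib] at hmain
  have hsp : ∑ a : α × β × γ, prob μ (fun ω => (X ω, Y ω, Z ω)) a = 1 :=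
    sum_prob μ hμ1 _
  have hite : ∑ a : α × β × γ, (if 0 < prob μ Z a.2.2 then
        prob μ (fun ω => (X ω, Z ω)) (a.1, a.2.2) * prob μ (fun ω => (Y ω, Z ω)) (a.2.1, a.2.2)
          / prob μ Z a.2.2 else 0) ≤ 1 := by
    have reorder : ∑ a : α × β × γ, (if 0 < prob μ Z a.2.2 then
          prob μ (fun ω => (X ω, Z ω)) (a.1, a.2.2) * prob μ (fun ω => (Y ω, Z ω)) (a.2.1, a.2.2)
            / prob μ Z a.2.2 else 0)
        = ∑ z, ∑ x, ∑ y, (if 0 < prob μ Z z then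
          prob μ (fun ω => (X ω, Z ω)) (x, z) * prob μ (fun ω => (Y ω, Z ω)) (y, z)
            / prob μ Z z else 0) := by
      rw [← Fintype.sum_equiv
        (⟨fun c : γ × α × β => (c.2.1, c.2.2, c.1), fun a => (a.2.2, a.1, a.2.1),
          fun _ => rfl, fun _ => rfl⟩ : γ × α × β ≃ α × β × γ) _ _ (fun c => rfl)]
      rw [Fintype.sum_prod_type]
      exact Finset.sum_congr rfl fun z _ => by
        rw [Fintype.sum_prod_type]
        exact Finset.sum_congr rfl fun x _ => Finset.sum_congr rfl fun y _ => rfl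
    rw [reorder]
    have hz : ∀ z ∈ Finset.univ, (∑ x, ∑ y, (if 0 < prob μ Z z then
          prob μ (fun ω => (X ω, Z ω)) (x, z) * prob μ (fun ω => (Y ω, Z ω)) (y, z)
            / prob μ Z z else 0)) ≤ prob μ Z z := by
      intro z _
      by_cases h : 0 < prob μ Z z
      · simp only [if_pos h]
        have : ∀ x, ∑ y, prob μ (fun ω => (X ω, Z ω)) (x, z) * prob μ (fun ω => (Y ω, Z ω)) (y, z)
              / prob μ Z z
            = prob μ (fun ω => (X ω, Z ω)) (x, z) * prob μ Z z / prob μ Z z := by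
          intro x
          rw [← Finset.sum_div, ← Finset.mul_sum, sum_marg_fst μ Y Z z]
        rw [Finset.sum_congr rfl (fun x _ => this x), ← Finset.sum_div, ← Finset.sum_mul,
          sum_marg_fst μ X Z z, mul_div_assoc, div_self h.ne', mul_one]
      · simp only [if_neg h]
        simp only [Finset.sum_const_zero]
        exact prob_nonneg μ hμ0 Z z
    calc ∑ z, ∑ x, ∑ y, _ ≤ ∑ z, prob μ Z z := Finset.sum_le_sum hz
      _ = 1 := sum_prob μ hμ1 Z
  linarith [hmain, hsp, hite]
end main2

section main3
variable {Ω α β γ : Type} [Fintype Ω] [Fintype α] [DecidableEq α] [Fintype β] [DecidableEq β]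
  [Fintype γ] [DecidableEq γ]
variable (μ : Ω → ℝ) (X : Ω → α) (Y : Ω → β) (Z : Ω → γ)

lemma condMI_eq_zero (hμ0 : ∀ ω, 0 ≤ μ ω) (hci : CondIndep μ X Y Z) :
    condMI μ X Y Z = 0 := by
  rw [condMI_eq_sum]
  refine Finset.sum_eq_zero fun a _ => ?_
  have hp : 0 ≤ prob μ (fun ω => (X ω, Y ω, Z ω)) a := prob_nonneg μ hμ0 _ a
  rcases eq_or_lt_of_le hp with hp0 | hp0
  · rw [← hp0, zero_mul]
  · have hpr : prob μ (fun ω => (X ω, Y ω, Z ω)) a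
        ≤ prob μ (fun ω => (X ω, Z ω)) (a.1, a.2.2) :=
      prob_le_prob_comp μ hμ0 (fun ω => (X ω, Y ω, Z ω)) (fun a => (a.1, a.2.2)) a
    have hps : prob μ (fun ω => (X ω, Y ω, Z ω)) a
        ≤ prob μ (fun ω => (Y ω, Z ω)) (a.2.1, a.2.2) :=
      prob_le_prob_comp μ hμ0 (fun ω => (X ω, Y ω, Z ω)) (fun a => (a.2.1, a.2.2)) a
    have hpt : prob μ (fun ω => (X ω, Y ω, Z ω)) a ≤ prob μ Z a.2.2 :=
      prob_le_prob_comp μ hμ0 (fun ω => (X ω, Y ω, Z ω)) (fun a => a.2.2) a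
    have htpos : 0 < prob μ Z a.2.2 := lt_of_lt_of_le hp0 hpt
    have hrpos : 0 < prob μ (fun ω => (X ω, Z ω)) (a.1, a.2.2) := lt_of_lt_of_le hp0 hpr
    have hspos : 0 < prob μ (fun ω => (Y ω, Z ω)) (a.2.1, a.2.2) := lt_of_lt_of_le hp0 hps
    have heq := hci a.1 a.2.1 a.2.2 htpos
    have heq' : prob μ (fun ω => (X ω, Y ω, Z ω)) a * prob μ Z a.2.2 =
        prob μ (fun ω => (X ω, Z ω)) (a.1, a.2.2) * prob μ (fun ω => (Y ω, Z ω)) (a.2.1, a.2.2) := by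
      rw [show a = (a.1, a.2.1, a.2.2) from rfl] at *
      exact heq
    have hlog : Real.log (prob μ (fun ω => (X ω, Y ω, Z ω)) a)
        + Real.log (prob μ Z a.2.2)
        = Real.log (prob μ (fun ω => (X ω, Z ω)) (a.1, a.2.2))
          + Real.log (prob μ (fun ω => (Y ω, Z ω)) (a.2.1, a.2.2)) := by
      rw [← Real.log_mul hp0.ne' htpos.ne', ← Real.log_mul hrpos.ne' hspos.ne', heq']
    rw [show Real.log (prob μ (fun ω => (X ω, Y ω, Z ω)) a)
          + Real.log (prob μ Z a.2.2)
          - Real.log (prob μ (fun ω => (X ω, Z ω)) (a.1, a.2.2))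
          - Real.log (prob μ (fun ω => (Y ω, Z ω)) (a.2.1, a.2.2)) = 0 from by
        rw [hlog]; ring, mul_zero]
end main3

section main4
variable {Ω α β β' γ γ' : Type} [Fintype Ω] [Fintype α] [DecidableEq α] [Fintype β] [DecidableEq β]
  [Fintype β'] [DecidableEq β'] [Fintype γ] [DecidableEq γ] [Fintype γ'] [DecidableEq γ']
variable (μ : Ω → ℝ)

lemma condMI_comm (X : Ω → α) (Y : Ω → β) (Z : Ω → γ) :
    condMI μ X Y Z = condMI μ Y X Z := by
  unfold condMI
  rw [entH_eq_of_inj μ (fun ω => (Y ω, X ω, Z ω)) (fun ω => (X ω, Y ω, Z ω))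
    (fun a => (a.2.1, a.1, a.2.2))
    (fun a b h => by simp only [Prod.ext_iff] at h ⊢; tauto) (fun ω => rfl)]
  ring

lemma condMI_congr_mid (X : Ω → α) (Y : Ω → β) (Z : Ω → γ) (f : β → β')
    (hf : Function.Injective f) :
    condMI μ X (fun ω => f (Y ω)) Z = condMI μ X Y Z := by
  unfold condMI
  rw [entH_eq_of_inj μ (fun ω => (Y ω, Z ω)) (fun ω => (f (Y ω), Z ω))
    (fun a => (f a.1, a.2))
    (fun a b h => by simp only [Prod.ext_iff] at h ⊢; exact ⟨hf h.1, h.2⟩) (fun ω => rfl)]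
  rw [entH_eq_of_inj μ (fun ω => (X ω, Y ω, Z ω)) (fun ω => (X ω, f (Y ω), Z ω))
    (fun a => (a.1, f a.2.1, a.2.2))
    (fun a b h => by simp only [Prod.ext_iff] at h ⊢; exact ⟨h.1, hf h.2.1, h.2.2⟩)
    (fun ω => rfl)]

lemma condMI_congr_right (X : Ω → α) (Y : Ω → β) (Z : Ω → γ) (f : γ → γ')
    (hf : Function.Injective f) :
    condMI μ X Y (fun ω => f (Z ω)) = condMI μ X Y Z := by
  unfold condMI
  rw [entH_eq_of_inj μ (fun ω => (X ω, Z ω)) (fun ω => (X ω, f (Z ω)))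
    (fun a => (a.1, f a.2))
    (fun a b h => by simp only [Prod.ext_iff] at h ⊢; exact ⟨h.1, hf h.2⟩) (fun ω => rfl)]
  rw [entH_eq_of_inj μ (fun ω => (Y ω, Z ω)) (fun ω => (Y ω, f (Z ω)))
    (fun a => (a.1, f a.2))
    (fun a b h => by simp only [Prod.ext_iff] at h ⊢; exact ⟨h.1, hf h.2⟩) (fun ω => rfl)]
  rw [entH_eq_of_inj μ (fun ω => (X ω, Y ω, Z ω)) (fun ω => (X ω, Y ω, f (Z ω)))
    (fun a => (a.1, a.2.1, f a.2.2))
    (fun a b h => by simp only [Prod.ext_iff] at h ⊢; exact ⟨h.1, h.2.1, hf h.2.2⟩)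
    (fun ω => rfl)]
  rw [entH_eq_of_inj μ Z (fun ω => f (Z ω)) f hf (fun ω => rfl)]

lemma condMI_chain (X : Ω → α) (Y : Ω → β) (Y' : Ω → β') (Z : Ω → γ) :
    condMI μ X (fun ω => (Y ω, Y' ω)) Z
      = condMI μ X Y Z + condMI μ X Y' (fun ω => (Y ω, Z ω)) := by
  unfold condMI
  rw [entH_eq_of_inj μ (fun ω => (Y' ω, Y ω, Z ω)) (fun ω => ((Y ω, Y' ω), Z ω))
    (fun a => ((a.2.1, a.1), a.2.2))
    (fun a b h => by simp only [Prod.ext_iff] at h ⊢; tauto) (fun ω => rfl)]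
  rw [entH_eq_of_inj μ (fun ω => (X ω, Y' ω, Y ω, Z ω)) (fun ω => (X ω, (Y ω, Y' ω), Z ω))
    (fun a => (a.1, (a.2.2.1, a.2.1), a.2.2.2))
    (fun a b h => by simp only [Prod.ext_iff] at h ⊢; tauto) (fun ω => rfl)]
  ring
end main4

section main5
variable {Ω α β γ : Type} [Fintype Ω] [Fintype α] [DecidableEq α] [Fintype β] [DecidableEq β]
  [Fintype γ] [DecidableEq γ]
variable (μ : Ω → ℝ)

lemma entH_unit (hμ1 : ∑ ω, μ ω = 1) : entH μ (fun _ : Ω => ()) = 0 := by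
  simp [entH, prob, hμ1]

lemma subadd (hμ0 : ∀ ω, 0 ≤ μ ω) (hμ1 : ∑ ω, μ ω = 1) (X : Ω → α) (Y : Ω → β) :
    entH μ (fun ω => (X ω, Y ω)) ≤ entH μ X + entH μ Y := by
  have h := condMI_nonneg μ X Y (fun _ => ()) hμ0 hμ1
  unfold condMI at h
  rw [entH_unit μ hμ1] at h
  rw [entH_eq_of_inj μ X (fun ω => (X ω, ())) (fun a => (a, ()))
    (fun a b h => by simpa using h) (fun ω => rfl)] at h
  rw [entH_eq_of_inj μ Y (fun ω => (Y ω, ())) (fun a => (a, ()))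
    (fun a b h => by simpa using h) (fun ω => rfl)] at h
  rw [entH_eq_of_inj μ (fun ω => (X ω, Y ω)) (fun ω => (X ω, Y ω, ()))
    (fun a => (a.1, a.2, ()))
    (fun a b h => by simp only [Prod.ext_iff] at h ⊢; tauto) (fun ω => rfl)] at h
  linarith

lemma condH_nonneg (hμ0 : ∀ ω, 0 ≤ μ ω) (hμ1 : ∑ ω, μ ω = 1) (X : Ω → α) (C : Ω → γ) :
    entH μ C ≤ entH μ (fun ω => (X ω, C ω)) := by
  have h := condMI_nonneg μ X X C hμ0 hμ1
  unfold condMI at h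
  rw [entH_eq_of_inj μ (fun ω => (X ω, C ω)) (fun ω => (X ω, X ω, C ω))
    (fun a => (a.1, a.1, a.2))
    (fun a b h => by simp only [Prod.ext_iff] at h ⊢; tauto) (fun ω => rfl)] at h
  linarith

lemma condMI_le_entH (hμ0 : ∀ ω, 0 ≤ μ ω) (hμ1 : ∑ ω, μ ω = 1)
    (X : Ω → α) (K : Ω → β) (C : Ω → γ) :
    condMI μ X K C ≤ entH μ K := by
  unfold condMI
  have h1 := subadd μ hμ0 hμ1 K C
  have h2 : entH μ (fun ω => (X ω, C ω)) ≤ entH μ (fun ω => (K ω, (X ω, C ω))) :=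
    condH_nonneg μ hμ0 hμ1 K (fun ω => (X ω, C ω))
  have h3 : entH μ (fun ω => (K ω, X ω, C ω)) = entH μ (fun ω => (X ω, K ω, C ω)) :=
    entH_eq_of_inj μ (fun ω => (X ω, K ω, C ω)) (fun ω => (K ω, X ω, C ω))
      (fun a => (a.2.1, a.1, a.2.2))
      (fun a b h => by simp only [Prod.ext_iff] at h ⊢; tauto) (fun ω => rfl)
  linarith
end main5


/-- If `V` is conditionally independent of `(Z,K)` given `(U,W)`, then
`I(U; (V,K) | (W,Z)) ≤ H(K) + I(U;V|W)`. -/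
theorem stmt1 {Ω 𝒰 𝒱 𝒲 𝒦 𝒵 : Type} [Fintype Ω]
    [Fintype 𝒰] [DecidableEq 𝒰] [Nonempty 𝒰]
    [Fintype 𝒱] [DecidableEq 𝒱] [Nonempty 𝒱]
    [Fintype 𝒲] [DecidableEq 𝒲] [Nonempty 𝒲]
    [Fintype 𝒦] [DecidableEq 𝒦] [Nonempty 𝒦]
    [Fintype 𝒵] [DecidableEq 𝒵] [Nonempty 𝒵]
    (μ : Ω → ℝ) (hμ0 : ∀ ω, 0 ≤ μ ω) (hμ1 : ∑ ω, μ ω = 1)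
    (U : Ω → 𝒰) (V : Ω → 𝒱) (W : Ω → 𝒲) (K : Ω → 𝒦) (Z : Ω → 𝒵)
    (hci : CondIndep μ V (fun ω => (Z ω, K ω)) (fun ω => (U ω, W ω))) :
    condMI μ U (fun ω => (V ω, K ω)) (fun ω => (W ω, Z ω))
      ≤ entH μ K + condMI μ U V W := by
  -- Step 1: swap (V,K) to (K,V)
  have s1 : condMI μ U (fun ω => (V ω, K ω)) (fun ω => (W ω, Z ω))
      = condMI μ U (fun ω => (K ω, V ω)) (fun ω => (W ω, Z ω)) :=
    condMI_congr_mid μ U (fun ω => (K ω, V ω)) (fun ω => (W ω, Z ω))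
      Prod.swap Prod.swap_injective
  -- Step 2: chain rule
  have s2 : condMI μ U (fun ω => (K ω, V ω)) (fun ω => (W ω, Z ω))
      = condMI μ U K (fun ω => (W ω, Z ω))
        + condMI μ U V (fun ω => (K ω, (W ω, Z ω))) :=
    condMI_chain μ U K V (fun ω => (W ω, Z ω))
  -- Step 3: I(U;K|WZ) ≤ H(K)
  have s3 : condMI μ U K (fun ω => (W ω, Z ω)) ≤ entH μ K :=
    condMI_le_entH μ hμ0 hμ1 U K (fun ω => (W ω, Z ω))
  -- Step 4: relabel the second term
  have s4 : condMI μ U V (fun ω => (K ω, (W ω, Z ω)))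
      = condMI μ V U (fun ω => ((Z ω, K ω), W ω)) := by
    rw [condMI_comm μ U V (fun ω => (K ω, (W ω, Z ω)))]
    exact condMI_congr_right μ V U (fun ω => ((Z ω, K ω), W ω))
      (fun a => (a.1.2, (a.2, a.1.1)))
      (fun a b h => by simp only [Prod.ext_iff] at h ⊢; tauto)
  -- Step 5: bound via conditional independence
  have c1 : condMI μ V (fun ω => (U ω, (Z ω, K ω))) W
      = condMI μ V U W + condMI μ V (fun ω => (Z ω, K ω)) (fun ω => (U ω, W ω)) :=
    condMI_chain μ V U (fun ω => (Z ω, K ω)) W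
  have c2 : condMI μ V (fun ω => ((Z ω, K ω), U ω)) W
      = condMI μ V (fun ω => (Z ω, K ω)) W
        + condMI μ V U (fun ω => ((Z ω, K ω), W ω)) :=
    condMI_chain μ V (fun ω => (Z ω, K ω)) U W
  have eqm : condMI μ V (fun ω => ((Z ω, K ω), U ω)) W
      = condMI μ V (fun ω => (U ω, (Z ω, K ω))) W :=
    condMI_congr_mid μ V (fun ω => (U ω, (Z ω, K ω))) W Prod.swap Prod.swap_injective
  have hzero : condMI μ V (fun ω => (Z ω, K ω)) (fun ω => (U ω, W ω)) = 0 :=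
    condMI_eq_zero μ V (fun ω => (Z ω, K ω)) (fun ω => (U ω, W ω)) hμ0 hci
  have hpos : 0 ≤ condMI μ V (fun ω => (Z ω, K ω)) W :=
    condMI_nonneg μ V (fun ω => (Z ω, K ω)) W hμ0 hμ1
  have hcomm : condMI μ V U W = condMI μ U V W := condMI_comm μ V U W
  linarith
end

section
/- Let 𝒳, 𝒴, 𝒵 be finite types, Q1 a channel from 𝒳 to 𝒴, Q2 a channel from 𝒴 to 𝒵, and φ: 𝒳 → ℝ≥0 a cost function. For a probability mass function p on 𝒳, let I_p(X;Y) denote the mutual information of the joint law p(x)·Q1(y|x), let I_p(X;Z) denote the mutual information of the joint law ∑_y p(x)·Q1(y|x)·Q2(z|y), and let E_p φ = ∑_x p(x)·φ(x). Define Γ(r,q) = sup { I_p(X;Y) − I_p(X;Z) : p a PMF on 𝒳 with I_p(X;Y) ≥ r and E_p φ ≤ q }, on the domain Dom = {(r,q) ∈ ℝ≥0 × ℝ≥0 : the constraint set is nonempty}. Then: (i) Dom is convex; (ii) Γ is concave on Dom, i.e., for (r1,q1), (r2,q2) ∈ Dom and θ ∈ [0,1], Γ(θr1+(1−θ)r2,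 θq1+(1−θ)q2) ≥ θΓ(r1,q1) + (1−θ)Γ(r2,q2); (iii) Γ is nonincreasing in r and nondecreasing in q. -/
open scoped BigOperators

/-- Mutual information of a joint probability mass function `P` on `α × β`
(natural logarithm, with `0·log 0 = 0`). -/
noncomputable def miJoint {α β : Type} [Fintype α] [Fintype β] (P : α → β → ℝ) : ℝ :=
  ∑ x, ∑ y, P x y * Real.log (P x y / ((∑ y', P x y') * (∑ x', P x' y)))

/-- Mutual information `I_p(X;Y)` between the input and output of the channel `Q1`,
for input distribution `p`. -/
noncomputable def IY {𝒳 𝒴 : Type} [Fintype 𝒳] [Fintype 𝒴]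
    (Q1 : 𝒳 → 𝒴 → ℝ) (p : 𝒳 → ℝ) : ℝ :=
  miJoint (fun x y => p x * Q1 x y)

/-- Mutual information `I_p(X;Z)` between the input of `Q1` and the output of the
cascade `Q1 ∘ Q2`, for input distribution `p`. -/
noncomputable def IZ {𝒳 𝒴 𝒵 : Type} [Fintype 𝒳] [Fintype 𝒴] [Fintype 𝒵]
    (Q1 : 𝒳 → 𝒴 → ℝ) (Q2 : 𝒴 → 𝒵 → ℝ) (p : 𝒳 → ℝ) : ℝ :=
  miJoint (fun x z => p x * ∑ y, Q1 x y * Q2 y z)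

/-- Feasible input distributions: PMFs `p` on `𝒳` with `I_p(X;Y) ≥ r` and `E_p φ ≤ q`. -/
def Feas {𝒳 𝒴 : Type} [Fintype 𝒳] [Fintype 𝒴]
    (Q1 : 𝒳 → 𝒴 → ℝ) (φ : 𝒳 → ℝ) (r q : ℝ) : Set (𝒳 → ℝ) :=
  {p | (∀ x, 0 ≤ p x) ∧ (∑ x, p x = 1) ∧ r ≤ IY Q1 p ∧ (∑ x, p x * φ x) ≤ q}

/-- Wyner's `Γ` function with a generalized power constraint:
`Γ(r,q) = sup { I_p(X;Y) − I_p(X;Z) : p ∈ Feas(r,q) }`. -/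
noncomputable def Gam {𝒳 𝒴 𝒵 : Type} [Fintype 𝒳] [Fintype 𝒴] [Fintype 𝒵]
    (Q1 : 𝒳 → 𝒴 → ℝ) (Q2 : 𝒴 → 𝒵 → ℝ) (φ : 𝒳 → ℝ) (r q : ℝ) : ℝ :=
  sSup ((fun p => IY Q1 p - IZ Q1 Q2 p) '' Feas Q1 φ r q)

/-- The domain of `Γ`: pairs `(r,q)` of nonnegative reals with nonempty constraint set. -/
def GamDom {𝒳 𝒴 : Type} [Fintype 𝒳] [Fintype 𝒴]
    (Q1 : 𝒳 → 𝒴 → ℝ) (φ : 𝒳 → ℝ) : Set (ℝ × ℝ) :=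
  {rq | 0 ≤ rq.1 ∧ 0 ≤ rq.2 ∧ (Feas Q1 φ rq.1 rq.2).Nonempty}

/-! ### Auxiliary material for the proof -/

namespace Wyner
set_option linter.unusedSectionVars false

open Finset

noncomputable def slog {ι : Type} [Fintype ι] (v : ι → ℝ) : ℝ := ∑ i, v i * Real.log (v i)

section LogSum
variable {ι : Type} [Fintype ι]

/-- The log-sum inequality. -/
lemma logSumIneq (a b : ι → ℝ) (ha : ∀ i, 0 ≤ a i) (hb : ∀ i, 0 ≤ b i)
    (hab : ∀ i, b i = 0 → a i = 0) :
    (∑ i, a i) * Real.log ((∑ i, a i) / (∑ i, b i)) ≤ ∑ i, a i * Real.log (a i / b i) := by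
  set A := ∑ i, a i with hAdef
  set B := ∑ i, b i with hBdef
  by_cases hA0 : A = 0
  · have hz : ∀ i ∈ Finset.univ, a i = 0 :=
      (Finset.sum_eq_zero_iff_of_nonneg (fun i _ => ha i)).1 hA0
    have : ∑ i, a i * Real.log (a i / b i) = 0 :=
      Finset.sum_eq_zero fun i hi => by rw [hz i hi]; ring
    rw [this, hA0, zero_mul]
  have hApos : 0 < A := lt_of_le_of_ne (Finset.sum_nonneg fun i _ => ha i) (Ne.symm hA0)
  have hB0 : B ≠ 0 := by
    intro h
    have hbz : ∀ i ∈ Finset.univ, b i = 0 :=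
      (Finset.sum_eq_zero_iff_of_nonneg (fun i _ => hb i)).1 h
    exact hA0 (Finset.sum_eq_zero fun i hi => hab i (hbz i hi))
  have hBpos : 0 < B := lt_of_le_of_ne (Finset.sum_nonneg fun i _ => hb i) (Ne.symm hB0)
  have hterm : ∀ i, a i * Real.log (A / B) + (a i - b i * (A / B)) ≤
      a i * Real.log (a i / b i) := by
    intro i
    by_cases hai : a i = 0
    · have : 0 ≤ b i * (A / B) := mul_nonneg (hb i) (div_nonneg hApos.le hBpos.le)
      simp [hai]; linarith
    have haipos : 0 < a i := lt_of_le_of_ne (ha i) (Ne.symm hai)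
    have hbi : b i ≠ 0 := fun h => hai (hab i h)
    have hbipos : 0 < b i := lt_of_le_of_ne (hb i) (Ne.symm hbi)
    set x : ℝ := (a i * B) / (b i * A) with hxdef
    have hxpos : 0 < x := div_pos (mul_pos haipos hBpos) (mul_pos hbipos hApos)
    have hxe : A / B * x = a i / b i := by
      rw [hxdef]; field_simp
    have hsplit : Real.log (a i / b i) = Real.log (A / B) + Real.log x := by
      rw [← hxe, Real.log_mul (by positivity) (ne_of_gt hxpos)]
    have hlog : 1 - x⁻¹ ≤ Real.log x := Real.one_sub_inv_le_log_of_pos hxpos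
    have h1 : a i * (1 - x⁻¹) ≤ a i * Real.log x :=
      mul_le_mul_of_nonneg_left hlog (ha i)
    have h2 : a i * (1 - x⁻¹) = a i - b i * (A / B) := by
      rw [hxdef]
      field_simp
    rw [hsplit]
    nlinarith [h1, h2]
  calc A * Real.log (A / B)
      = ∑ i, (a i * Real.log (A / B) + (a i - b i * (A / B))) := by
        rw [Finset.sum_add_distrib, ← Finset.sum_mul, Finset.sum_sub_distrib,
          ← Finset.sum_mul, ← hAdef, ← hBdef]
        have : B * (A / B) = A := by field_simp
        rw [this]; ring
    _ ≤ ∑ i, a i * Real.log (a i / b i) := Finset.sum_le_sum fun i _ => hterm i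

lemma klNonneg (a b : ι → ℝ) (ha : ∀ i, 0 ≤ a i) (hb : ∀ i, 0 ≤ b i)
    (hab : ∀ i, b i = 0 → a i = 0) (hsum : ∑ i, a i = ∑ i, b i) :
    0 ≤ ∑ i, a i * Real.log (a i / b i) := by
  have h := logSumIneq a b ha hb hab
  have hL : (∑ i, a i) * Real.log ((∑ i, a i) / (∑ i, b i)) = 0 := by
    rw [hsum]
    rcases eq_or_ne (∑ i, b i) 0 with h0 | h0
    · rw [h0]; ring
    · rw [div_self h0, Real.log_one, mul_zero]
  linarith

lemma mixIdentity (θ : ℝ) (hθ0 : 0 < θ) (hθ1 : θ < 1) (ν1 ν2 ν : ι → ℝ)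
    (h1 : ∀ i, 0 ≤ ν1 i) (h2 : ∀ i, 0 ≤ ν2 i)
    (hν : ∀ i, ν i = θ * ν1 i + (1 - θ) * ν2 i) :
    θ * (∑ i, ν1 i * Real.log (ν1 i / ν i)) + (1 - θ) * (∑ i, ν2 i * Real.log (ν2 i / ν i))
      = θ * slog ν1 + (1 - θ) * slog ν2 - slog ν := by
  unfold slog
  rw [Finset.mul_sum, Finset.mul_sum, Finset.mul_sum, Finset.mul_sum,
    ← Finset.sum_add_distrib, ← Finset.sum_add_distrib, ← Finset.sum_sub_distrib]
  refine Finset.sum_congr rfl fun i _ => ?_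
  by_cases hνi : ν i = 0
  · have hb1 : ν1 i = 0 := by nlinarith [hν i, h1 i, h2 i]
    have hb2 : ν2 i = 0 := by nlinarith [hν i, h1 i, h2 i]
    simp [hνi, hb1, hb2]
  have e1 : ν1 i * Real.log (ν1 i / ν i) = ν1 i * Real.log (ν1 i) - ν1 i * Real.log (ν i) := by
    rcases eq_or_ne (ν1 i) 0 with h | h
    · simp [h]
    · rw [Real.log_div h hνi]; ring
  have e2 : ν2 i * Real.log (ν2 i / ν i) = ν2 i * Real.log (ν2 i) - ν2 i * Real.log (ν i) := by
    rcases eq_or_ne (ν2 i) 0 with h | h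
    · simp [h]
    · rw [Real.log_div h hνi]; ring
  rw [e1, e2, hν i]; ring

lemma linSum (θ : ℝ) (p1 p2 g : ι → ℝ) :
    ∑ i, (θ * p1 i + (1 - θ) * p2 i) * g i
      = θ * ∑ i, p1 i * g i + (1 - θ) * ∑ i, p2 i * g i := by
  rw [Finset.mul_sum, Finset.mul_sum, ← Finset.sum_add_distrib]
  exact Finset.sum_congr rfl fun i _ => by ring

end LogSum

section DP
variable {β γ : Type} [Fintype β] [Fintype γ]

/-- Data-processing inequality for relative entropy, via the log-sum inequality. -/
lemma dataProc (Q : β → γ → ℝ) (hQ0 : ∀ y z, 0 ≤ Q y z) (hQ1 : ∀ y, ∑ z, Q y z = 1)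
    (ν1 ν : β → ℝ) (h1 : ∀ y, 0 ≤ ν1 y) (hν : ∀ y, 0 ≤ ν y)
    (hdom : ∀ y, ν y = 0 → ν1 y = 0) :
    ∑ z, (∑ y, ν1 y * Q y z) * Real.log ((∑ y, ν1 y * Q y z) / (∑ y, ν y * Q y z)) ≤
      ∑ y, ν1 y * Real.log (ν1 y / ν y) := by
  calc ∑ z, (∑ y, ν1 y * Q y z) * Real.log ((∑ y, ν1 y * Q y z) / (∑ y, ν y * Q y z))
      ≤ ∑ z, ∑ y, ν1 y * Q y z * Real.log ((ν1 y * Q y z) / (ν y * Q y z)) := by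
        refine Finset.sum_le_sum fun z _ => logSumIneq _ _
          (fun y => mul_nonneg (h1 y) (hQ0 y z)) (fun y => mul_nonneg (hν y) (hQ0 y z))
          (fun y h => ?_)
        rcases mul_eq_zero.1 h with h' | h'
        · rw [hdom y h', zero_mul]
        · rw [h', mul_zero]
    _ = ∑ z, ∑ y, ν1 y * Q y z * Real.log (ν1 y / ν y) := by
        refine Finset.sum_congr rfl fun z _ => Finset.sum_congr rfl fun y _ => ?_
        rcases eq_or_ne (Q y z) 0 with h | h
        · simp [h]
        · rw [mul_div_mul_right _ _ h]
    _ = ∑ y, ν1 y * Real.log (ν1 y / ν y) := by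
        rw [Finset.sum_comm]
        refine Finset.sum_congr rfl fun y _ => ?_
        have : ∑ z, ν1 y * Q y z * Real.log (ν1 y / ν y)
            = (ν1 y * Real.log (ν1 y / ν y)) * ∑ z, Q y z := by
          rw [Finset.mul_sum]
          exact Finset.sum_congr rfl fun z _ => by ring
        rw [this, hQ1, mul_one]

/-- Decomposition of mutual information of a channel joint law. -/
lemma miChan (Q : β → γ → ℝ) (hQ0 : ∀ x y, 0 ≤ Q x y) (hQ1 : ∀ x, ∑ y, Q x y = 1)
    (p : β → ℝ) (hp : ∀ x, 0 ≤ p x) :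
    miJoint (fun x y => p x * Q x y) =
      (∑ x, p x * ∑ y, Q x y * Real.log (Q x y)) - slog (fun y => ∑ x, p x * Q x y) := by
  unfold miJoint slog
  have hm : ∀ x, ∑ y', p x * Q x y' = p x := fun x => by
    rw [← Finset.mul_sum, hQ1, mul_one]
  have hterm : ∀ x y, p x * Q x y *
      Real.log (p x * Q x y / ((∑ y', p x * Q x y') * ∑ x', p x' * Q x' y)) =
      p x * Q x y * Real.log (Q x y) - p x * Q x y * Real.log (∑ x', p x' * Q x' y) := by
    intro x y
    rcases eq_or_ne (p x) 0 with hpx | hpx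
    · simp [hpx]
    rcases eq_or_ne (Q x y) 0 with hq | hq
    · simp [hq]
    have hνpos : 0 < ∑ x', p x' * Q x' y := by
      have h1 : p x * Q x y ≤ ∑ x', p x' * Q x' y :=
        Finset.single_le_sum (fun x' _ => mul_nonneg (hp x') (hQ0 x' y)) (Finset.mem_univ x)
      have : 0 < p x * Q x y :=
        lt_of_le_of_ne (mul_nonneg (hp x) (hQ0 x y)) (Ne.symm (mul_ne_zero hpx hq))
      linarith
    rw [hm x, mul_div_mul_left _ _ hpx, Real.log_div hq (ne_of_gt hνpos)]
    ring
  calc ∑ x, ∑ y, p x * Q x y *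
        Real.log (p x * Q x y / ((∑ y', p x * Q x y') * ∑ x', p x' * Q x' y))
      = ∑ x, ∑ y, (p x * Q x y * Real.log (Q x y)
          - p x * Q x y * Real.log (∑ x', p x' * Q x' y)) := by
        exact Finset.sum_congr rfl fun x _ => Finset.sum_congr rfl fun y _ => hterm x y
    _ = (∑ x, p x * ∑ y, Q x y * Real.log (Q x y))
          - ∑ y, (∑ x, p x * Q x y) * Real.log (∑ x', p x' * Q x' y) := by
        simp only [Finset.sum_sub_distrib]
        congr 1
        · refine Finset.sum_congr rfl fun x _ => ?_
          rw [Finset.mul_sum]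
          exact Finset.sum_congr rfl fun y _ => by ring
        · rw [Finset.sum_comm]
          refine Finset.sum_congr rfl fun y _ => ?_
          rw [Finset.sum_mul]
    _ = _ := rfl

/-- Nonnegativity of mutual information. -/
lemma miNonneg (P : β → γ → ℝ) (h0 : ∀ x y, 0 ≤ P x y) (h1 : ∑ x, ∑ y, P x y = 1) :
    0 ≤ miJoint P := by
  unfold miJoint
  have key := klNonneg (ι := β × γ) (fun i => P i.1 i.2)
    (fun i => (∑ y', P i.1 y') * (∑ x', P x' i.2))
    (fun i => h0 i.1 i.2)
    (fun i => mul_nonneg (Finset.sum_nonneg fun y _ => h0 i.1 y)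
      (Finset.sum_nonneg fun x _ => h0 x i.2))
    (fun i h => ?_) ?_
  · calc (0:ℝ) ≤ ∑ i : β × γ, P i.1 i.2 *
          Real.log (P i.1 i.2 / ((∑ y', P i.1 y') * (∑ x', P x' i.2))) := key
      _ = _ := by rw [Fintype.sum_prod_type]
  · rcases mul_eq_zero.1 h with h' | h'
    · have := (Finset.sum_eq_zero_iff_of_nonneg (fun y _ => h0 i.1 y)).1 h'
      exact this i.2 (Finset.mem_univ _)
    · have := (Finset.sum_eq_zero_iff_of_nonneg (fun x _ => h0 x i.2)).1 h'
      exact this i.1 (Finset.mem_univ _)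
  · simp only [Fintype.sum_prod_type]
    rw [h1]
    have e : ∑ i : β, ∑ j : γ, (∑ y', P i y') * (∑ x', P x' j)
        = (∑ i, ∑ y', P i y') * (∑ j, ∑ x', P x' j) := by
      rw [Finset.sum_mul_sum]
    rw [e, h1, Finset.sum_comm, h1, mul_one]

end DP

section Main
variable {𝒳 𝒴 𝒵 : Type} [Fintype 𝒳] [Fintype 𝒴] [Fintype 𝒵]
variable (Q1 : 𝒳 → 𝒴 → ℝ) (Q2 : 𝒴 → 𝒵 → ℝ)

/-- The output distribution on `𝒴`. -/
noncomputable def nuY (p : 𝒳 → ℝ) : 𝒴 → ℝ := fun y => ∑ x, p x * Q1 x y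

/-- The cascade channel `𝒳 → 𝒵`. -/
noncomputable def Wc : 𝒳 → 𝒵 → ℝ := fun x z => ∑ y, Q1 x y * Q2 y z

/-- Pushing a distribution on `𝒴` through `Q2`. -/
noncomputable def muZ (v : 𝒴 → ℝ) : 𝒵 → ℝ := fun z => ∑ y, v y * Q2 y z

variable (hQ10 : ∀ x y, 0 ≤ Q1 x y) (hQ11 : ∀ x, ∑ y, Q1 x y = 1)
variable (hQ20 : ∀ y z, 0 ≤ Q2 y z) (hQ21 : ∀ y, ∑ z, Q2 y z = 1)

section
include hQ10 hQ11

lemma nuY_nonneg (p : 𝒳 → ℝ) (hp : ∀ x, 0 ≤ p x) (y : 𝒴) : 0 ≤ nuY Q1 p y :=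
  Finset.sum_nonneg fun x _ => mul_nonneg (hp x) (hQ10 x y)

lemma sum_nuY (p : 𝒳 → ℝ) : ∑ y, nuY Q1 p y = ∑ x, p x := by
  unfold nuY
  rw [Finset.sum_comm]
  exact Finset.sum_congr rfl fun x _ => by rw [← Finset.mul_sum, hQ11, mul_one]

lemma IY_eq (p : 𝒳 → ℝ) (hp : ∀ x, 0 ≤ p x) :
    IY Q1 p = (∑ x, p x * ∑ y, Q1 x y * Real.log (Q1 x y)) - slog (nuY Q1 p) :=
  miChan Q1 hQ10 hQ11 p hp

end

section
include hQ10 hQ11 hQ20 hQ21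

lemma Wc_nonneg (x : 𝒳) (z : 𝒵) : 0 ≤ Wc Q1 Q2 x z :=
  Finset.sum_nonneg fun y _ => mul_nonneg (hQ10 x y) (hQ20 y z)

lemma Wc_sum (x : 𝒳) : ∑ z, Wc Q1 Q2 x z = 1 := by
  unfold Wc
  rw [Finset.sum_comm]
  calc ∑ y, ∑ z, Q1 x y * Q2 y z = ∑ y, Q1 x y * ∑ z, Q2 y z := by
        exact Finset.sum_congr rfl fun y _ => by rw [Finset.mul_sum]
    _ = 1 := by simp only [hQ21, mul_one]; exact hQ11 x

lemma muZ_nuY (p : 𝒳 → ℝ) :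
    (fun z => ∑ x, p x * Wc Q1 Q2 x z) = muZ Q2 (nuY Q1 p) := by
  funext z
  unfold Wc muZ nuY
  simp_rw [Finset.mul_sum]
  rw [Finset.sum_comm]
  refine Finset.sum_congr rfl fun y _ => ?_
  rw [Finset.sum_mul]
  exact Finset.sum_congr rfl fun x _ => by ring

lemma IZ_eq (p : 𝒳 → ℝ) (hp : ∀ x, 0 ≤ p x) :
    IZ Q1 Q2 p = (∑ x, p x * ∑ z, Wc Q1 Q2 x z * Real.log (Wc Q1 Q2 x z))
      - slog (muZ Q2 (nuY Q1 p)) := by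
  have h := miChan (Wc Q1 Q2) (Wc_nonneg Q1 Q2 hQ10 hQ11 hQ20 hQ21) (Wc_sum Q1 Q2 hQ10 hQ11 hQ20 hQ21) p hp
  have h0 : IZ Q1 Q2 p = miJoint (fun x z => p x * Wc Q1 Q2 x z) := rfl
  rw [h0, h, muZ_nuY Q1 Q2 hQ10 hQ11 hQ20 hQ21]

end

lemma muZ_nonneg (hQ20 : ∀ y z, 0 ≤ Q2 y z) (v : 𝒴 → ℝ) (hv : ∀ y, 0 ≤ v y) (z : 𝒵) :
    0 ≤ muZ Q2 v z :=
  Finset.sum_nonneg fun y _ => mul_nonneg (hv y) (hQ20 y z)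

lemma sum_muZ (hQ21 : ∀ y, ∑ z, Q2 y z = 1) (v : 𝒴 → ℝ) : ∑ z, muZ Q2 v z = ∑ y, v y := by
  unfold muZ
  rw [Finset.sum_comm]
  exact Finset.sum_congr rfl fun y _ => by rw [← Finset.mul_sum, hQ21, mul_one]

section
include hQ10 hQ11

/-- Concavity inequality for `I(X;Y)` under mixtures. -/
lemma concIY (p1 p2 : 𝒳 → ℝ) (h1 : ∀ x, 0 ≤ p1 x) (h2 : ∀ x, 0 ≤ p2 x)
    (hs1 : ∑ x, p1 x = 1) (hs2 : ∑ x, p2 x = 1)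
    (θ : ℝ) (hθ0 : 0 < θ) (hθ1 : θ < 1) :
    θ * IY Q1 p1 + (1 - θ) * IY Q1 p2 ≤ IY Q1 (fun x => θ * p1 x + (1 - θ) * p2 x) := by
  set p : 𝒳 → ℝ := fun x => θ * p1 x + (1 - θ) * p2 x with hpdef
  have hp : ∀ x, 0 ≤ p x := fun x =>
    add_nonneg (mul_nonneg hθ0.le (h1 x)) (mul_nonneg (by linarith) (h2 x))
  have hνlin : ∀ y, nuY Q1 p y = θ * nuY Q1 p1 y + (1 - θ) * nuY Q1 p2 y := fun y =>
    linSum θ p1 p2 (fun x => Q1 x y)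
  have hkl1 : 0 ≤ ∑ y, nuY Q1 p1 y * Real.log (nuY Q1 p1 y / nuY Q1 p y) := by
    refine klNonneg _ _ (nuY_nonneg Q1 hQ10 hQ11 p1 h1) (nuY_nonneg Q1 hQ10 hQ11 p hp)
      (fun y h => ?_) ?_
    · nlinarith [hνlin y, nuY_nonneg Q1 hQ10 hQ11 p1 h1 y, nuY_nonneg Q1 hQ10 hQ11 p2 h2 y]
    · rw [sum_nuY Q1 hQ10 hQ11, sum_nuY Q1 hQ10 hQ11, hs1]
      have : ∑ x, p x = 1 := by
        simp only [hpdef, Finset.sum_add_distrib, ← Finset.mul_sum, hs1, hs2]; ring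
      rw [this]
  have hkl2 : 0 ≤ ∑ y, nuY Q1 p2 y * Real.log (nuY Q1 p2 y / nuY Q1 p y) := by
    refine klNonneg _ _ (nuY_nonneg Q1 hQ10 hQ11 p2 h2) (nuY_nonneg Q1 hQ10 hQ11 p hp)
      (fun y h => ?_) ?_
    · nlinarith [hνlin y, nuY_nonneg Q1 hQ10 hQ11 p1 h1 y, nuY_nonneg Q1 hQ10 hQ11 p2 h2 y]
    · rw [sum_nuY Q1 hQ10 hQ11, sum_nuY Q1 hQ10 hQ11, hs2]
      have : ∑ x, p x = 1 := by
        simp only [hpdef, Finset.sum_add_distrib, ← Finset.mul_sum, hs1, hs2]; ring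
      rw [this]
  have hmix := mixIdentity θ hθ0 hθ1 (nuY Q1 p1) (nuY Q1 p2) (nuY Q1 p)
    (nuY_nonneg Q1 hQ10 hQ11 p1 h1) (nuY_nonneg Q1 hQ10 hQ11 p2 h2) hνlin
  rw [IY_eq Q1 hQ10 hQ11 p1 h1, IY_eq Q1 hQ10 hQ11 p2 h2, IY_eq Q1 hQ10 hQ11 p hp,
    linSum θ p1 p2 (fun x => ∑ y, Q1 x y * Real.log (Q1 x y))]
  nlinarith [mul_nonneg hθ0.le hkl1, mul_nonneg (by linarith : (0:ℝ) ≤ 1 - θ) hkl2]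

end

section
include hQ10 hQ11 hQ20 hQ21

/-- The key concavity inequality for `I(X;Y) − I(X;Z)` under mixtures
(data processing / `I(X;Y|Z)` concavity). -/
lemma keyIneq (p1 p2 : 𝒳 → ℝ) (h1 : ∀ x, 0 ≤ p1 x) (h2 : ∀ x, 0 ≤ p2 x)
    (hs1 : ∑ x, p1 x = 1) (hs2 : ∑ x, p2 x = 1)
    (θ : ℝ) (hθ0 : 0 < θ) (hθ1 : θ < 1) :
    θ * (IY Q1 p1 - IZ Q1 Q2 p1) + (1 - θ) * (IY Q1 p2 - IZ Q1 Q2 p2) ≤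
      IY Q1 (fun x => θ * p1 x + (1 - θ) * p2 x)
        - IZ Q1 Q2 (fun x => θ * p1 x + (1 - θ) * p2 x) := by
  set p : 𝒳 → ℝ := fun x => θ * p1 x + (1 - θ) * p2 x with hpdef
  have hp : ∀ x, 0 ≤ p x := fun x =>
    add_nonneg (mul_nonneg hθ0.le (h1 x)) (mul_nonneg (by linarith) (h2 x))
  set ν1 := nuY Q1 p1
  set ν2 := nuY Q1 p2
  set ν := nuY Q1 p
  have hν1 : ∀ y, 0 ≤ ν1 y := nuY_nonneg Q1 hQ10 hQ11 p1 h1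
  have hν2 : ∀ y, 0 ≤ ν2 y := nuY_nonneg Q1 hQ10 hQ11 p2 h2
  have hν : ∀ y, 0 ≤ ν y := nuY_nonneg Q1 hQ10 hQ11 p hp
  have hνlin : ∀ y, ν y = θ * ν1 y + (1 - θ) * ν2 y := fun y =>
    linSum θ p1 p2 (fun x => Q1 x y)
  have hdom1 : ∀ y, ν y = 0 → ν1 y = 0 := fun y h => by
    nlinarith [hνlin y, hν1 y, hν2 y]
  have hdom2 : ∀ y, ν y = 0 → ν2 y = 0 := fun y h => by
    nlinarith [hνlin y, hν1 y, hν2 y]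
  have hμlin : ∀ z, muZ Q2 ν z = θ * muZ Q2 ν1 z + (1 - θ) * muZ Q2 ν2 z := by
    intro z
    unfold muZ
    calc ∑ y, ν y * Q2 y z = ∑ y, (θ * ν1 y + (1 - θ) * ν2 y) * Q2 y z :=
          Finset.sum_congr rfl fun y _ => by rw [hνlin y]
      _ = _ := linSum θ ν1 ν2 (fun y => Q2 y z)
  -- identities
  have hmixν := mixIdentity θ hθ0 hθ1 ν1 ν2 ν hν1 hν2 hνlin
  have hmixμ := mixIdentity θ hθ0 hθ1 (muZ Q2 ν1) (muZ Q2 ν2) (muZ Q2 ν)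
    (muZ_nonneg Q2 hQ20 ν1 hν1) (muZ_nonneg Q2 hQ20 ν2 hν2) hμlin
  -- data processing
  have hdp1 : ∑ z, muZ Q2 ν1 z * Real.log (muZ Q2 ν1 z / muZ Q2 ν z) ≤
      ∑ y, ν1 y * Real.log (ν1 y / ν y) :=
    dataProc Q2 hQ20 hQ21 ν1 ν hν1 hν hdom1
  have hdp2 : ∑ z, muZ Q2 ν2 z * Real.log (muZ Q2 ν2 z / muZ Q2 ν z) ≤
      ∑ y, ν2 y * Real.log (ν2 y / ν y) :=
    dataProc Q2 hQ20 hQ21 ν2 ν hν2 hν hdom2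
  have hcore : θ * slog (muZ Q2 ν1) + (1 - θ) * slog (muZ Q2 ν2) - slog (muZ Q2 ν) ≤
      θ * slog ν1 + (1 - θ) * slog ν2 - slog ν := by
    rw [← hmixν, ← hmixμ]
    have a1 := mul_le_mul_of_nonneg_left hdp1 hθ0.le
    have a2 := mul_le_mul_of_nonneg_left hdp2 (by linarith : (0:ℝ) ≤ 1 - θ)
    linarith
  rw [IY_eq Q1 hQ10 hQ11 p1 h1, IY_eq Q1 hQ10 hQ11 p2 h2, IY_eq Q1 hQ10 hQ11 p hp,
    IZ_eq Q1 Q2 hQ10 hQ11 hQ20 hQ21 p1 h1, IZ_eq Q1 Q2 hQ10 hQ11 hQ20 hQ21 p2 h2,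
    IZ_eq Q1 Q2 hQ10 hQ11 hQ20 hQ21 p hp,
    linSum θ p1 p2 (fun x => ∑ y, Q1 x y * Real.log (Q1 x y)),
    linSum θ p1 p2 (fun x => ∑ z, Wc Q1 Q2 x z * Real.log (Wc Q1 Q2 x z))]
  linarith

lemma IZ_nonneg (p : 𝒳 → ℝ) (hp : ∀ x, 0 ≤ p x) (hs : ∑ x, p x = 1) :
    0 ≤ IZ Q1 Q2 p := by
  have h0 : IZ Q1 Q2 p = miJoint (fun x z => p x * Wc Q1 Q2 x z) := rfl
  rw [h0]
  refine miNonneg _ (fun x z => mul_nonneg (hp x) (Wc_nonneg Q1 Q2 hQ10 hQ11 hQ20 hQ21 x z)) ?_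
  calc ∑ x, ∑ z, p x * Wc Q1 Q2 x z = ∑ x, p x * ∑ z, Wc Q1 Q2 x z := by
        exact Finset.sum_congr rfl fun x _ => by rw [Finset.mul_sum]
    _ = 1 := by simp only [Wc_sum Q1 Q2 hQ10 hQ11 hQ20 hQ21, mul_one]; exact hs

end

section
include hQ10 hQ11

lemma IY_le_card (p : 𝒳 → ℝ) (hp : ∀ x, 0 ≤ p x) (hs : ∑ x, p x = 1) :
    IY Q1 p ≤ (Fintype.card 𝒴 : ℝ) := by
  rw [IY_eq Q1 hQ10 hQ11 p hp]
  have hlin : ∑ x, p x * ∑ y, Q1 x y * Real.log (Q1 x y) ≤ 0 := by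
    refine Finset.sum_nonpos fun x _ => mul_nonpos_of_nonneg_of_nonpos (hp x) ?_
    refine Finset.sum_nonpos fun y _ => Real.mul_log_nonpos (hQ10 x y) ?_
    calc Q1 x y ≤ ∑ y', Q1 x y' :=
          Finset.single_le_sum (fun y' _ => hQ10 x y') (Finset.mem_univ y)
      _ = 1 := hQ11 x
  have hslog : (1 : ℝ) - (Fintype.card 𝒴 : ℝ) ≤ slog (nuY Q1 p) := by
    have hterm : ∀ y, nuY Q1 p y - 1 ≤ nuY Q1 p y * Real.log (nuY Q1 p y) := by
      intro y
      rcases eq_or_lt_of_le (nuY_nonneg Q1 hQ10 hQ11 p hp y) with h | h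
      · rw [← h]; norm_num
      · have := Real.one_sub_inv_le_log_of_pos h
        have h2 := mul_le_mul_of_nonneg_left this (le_of_lt h)
        have h3 : nuY Q1 p y * (1 - (nuY Q1 p y)⁻¹) = nuY Q1 p y - 1 := by
          field_simp
        linarith
    calc (1 : ℝ) - (Fintype.card 𝒴 : ℝ) = ∑ y : 𝒴, (nuY Q1 p y - 1) := by
          rw [Finset.sum_sub_distrib, sum_nuY Q1 hQ10 hQ11, hs]
          simp [Finset.card_univ]
      _ ≤ slog (nuY Q1 p) := Finset.sum_le_sum fun y _ => hterm y
  have hcard : (0:ℝ) ≤ (Fintype.card 𝒴 : ℝ) := Nat.cast_nonneg _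
  linarith

end

end Main

end Wyner

/-- (i) the domain of `Γ` is convex; (ii) `Γ` is concave on its domain;
(iii) `Γ` is nonincreasing in `r` and nondecreasing in `q`. -/
theorem stmt7 {𝒳 𝒴 𝒵 : Type} [Fintype 𝒳] [Nonempty 𝒳] [Fintype 𝒴] [Nonempty 𝒴]
    [Fintype 𝒵] [Nonempty 𝒵]
    (Q1 : 𝒳 → 𝒴 → ℝ) (hQ10 : ∀ x y, 0 ≤ Q1 x y) (hQ11 : ∀ x, ∑ y, Q1 x y = 1)
    (Q2 : 𝒴 → 𝒵 → ℝ) (hQ20 : ∀ y z, 0 ≤ Q2 y z) (hQ21 : ∀ y, ∑ z, Q2 y z = 1)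
    (φ : 𝒳 → ℝ) (hφ : ∀ x, 0 ≤ φ x) :
    Convex ℝ (GamDom Q1 φ) ∧
    (∀ r1 q1 r2 q2 θ : ℝ, (r1, q1) ∈ GamDom Q1 φ → (r2, q2) ∈ GamDom Q1 φ →
      0 ≤ θ → θ ≤ 1 →
      θ * Gam Q1 Q2 φ r1 q1 + (1 - θ) * Gam Q1 Q2 φ r2 q2 ≤
        Gam Q1 Q2 φ (θ * r1 + (1 - θ) * r2) (θ * q1 + (1 - θ) * q2)) ∧
    (∀ r1 r2 q : ℝ, (r1, q) ∈ GamDom Q1 φ → (r2, q) ∈ GamDom Q1 φ → r1 ≤ r2 →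
      Gam Q1 Q2 φ r2 q ≤ Gam Q1 Q2 φ r1 q) ∧
    (∀ r q1 q2 : ℝ, (r, q1) ∈ GamDom Q1 φ → (r, q2) ∈ GamDom Q1 φ → q1 ≤ q2 →
      Gam Q1 Q2 φ r q1 ≤ Gam Q1 Q2 φ r q2) := by
  classical
  -- feasibility of mixtures
  have mixFeas : ∀ (r1 q1 r2 q2 θ : ℝ) (p1 p2 : 𝒳 → ℝ), 0 < θ → θ < 1 →
      p1 ∈ Feas Q1 φ r1 q1 → p2 ∈ Feas Q1 φ r2 q2 →
      (fun x => θ * p1 x + (1 - θ) * p2 x) ∈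
        Feas Q1 φ (θ * r1 + (1 - θ) * r2) (θ * q1 + (1 - θ) * q2) := by
    intro r1 q1 r2 q2 θ p1 p2 hθ0 hθ1 hp1 hp2
    obtain ⟨h1n, h1s, h1r, h1q⟩ := hp1
    obtain ⟨h2n, h2s, h2r, h2q⟩ := hp2
    refine ⟨fun x => add_nonneg (mul_nonneg hθ0.le (h1n x))
      (mul_nonneg (by linarith) (h2n x)), ?_, ?_, ?_⟩
    · simp only [Finset.sum_add_distrib, ← Finset.mul_sum, h1s, h2s]; ring
    · have hc := Wyner.concIY Q1 hQ10 hQ11 p1 p2 h1n h2n h1s h2s θ hθ0 hθ1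
      have a1 : θ * r1 ≤ θ * IY Q1 p1 := mul_le_mul_of_nonneg_left h1r hθ0.le
      have a2 : (1 - θ) * r2 ≤ (1 - θ) * IY Q1 p2 :=
        mul_le_mul_of_nonneg_left h2r (by linarith)
      linarith
    · have : ∑ x, (θ * p1 x + (1 - θ) * p2 x) * φ x
          = θ * ∑ x, p1 x * φ x + (1 - θ) * ∑ x, p2 x * φ x := Wyner.linSum θ p1 p2 φ
      rw [this]
      have a1 : θ * ∑ x, p1 x * φ x ≤ θ * q1 := mul_le_mul_of_nonneg_left h1q hθ0.le
      have a2 : (1 - θ) * ∑ x, p2 x * φ x ≤ (1 - θ) * q2 :=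
        mul_le_mul_of_nonneg_left h2q (by linarith)
      linarith
  -- boundedness of the image set
  have bdd : ∀ r q : ℝ, BddAbove ((fun p => IY Q1 p - IZ Q1 Q2 p) '' Feas Q1 φ r q) := by
    intro r q
    refine ⟨(Fintype.card 𝒴 : ℝ), ?_⟩
    rintro v ⟨p, hp, rfl⟩
    show IY Q1 p - IZ Q1 Q2 p ≤ (Fintype.card 𝒴 : ℝ)
    obtain ⟨hn, hs, _, _⟩ := hp
    have h1 := Wyner.IY_le_card Q1 hQ10 hQ11 p hn hs
    have h2 := Wyner.IZ_nonneg Q1 Q2 hQ10 hQ11 hQ20 hQ21 p hn hs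
    linarith
  refine ⟨?_, ?_, ?_, ?_⟩
  · -- convexity of the domain
    rintro ⟨r1, q1⟩ ⟨hr1, hq1, p1, hp1⟩ ⟨r2, q2⟩ ⟨hr2, hq2, p2, hp2⟩ a b ha hb hab
    rcases eq_or_lt_of_le ha with ha0 | ha0
    · have hb1 : b = 1 := by linarith
      simp only [← ha0, hb1, zero_smul, one_smul, zero_add]
      exact ⟨hr2, hq2, p2, hp2⟩
    rcases eq_or_lt_of_le hb with hb0 | hb0
    · have ha1 : a = 1 := by linarith
      simp only [← hb0, ha1, zero_smul, one_smul, add_zero]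
      exact ⟨hr1, hq1, p1, hp1⟩
    have hb' : b = 1 - a := by linarith
    subst hb'
    refine ⟨?_, ?_, ?_⟩
    · simp only [Prod.smul_mk, Prod.mk_add_mk, smul_eq_mul]
      exact add_nonneg (mul_nonneg ha hr1) (mul_nonneg (by linarith) hr2)
    · simp only [Prod.smul_mk, Prod.mk_add_mk, smul_eq_mul]
      exact add_nonneg (mul_nonneg ha hq1) (mul_nonneg (by linarith) hq2)
    · simp only [Prod.smul_mk, Prod.mk_add_mk, smul_eq_mul]
      exact ⟨_, mixFeas r1 q1 r2 q2 a p1 p2 ha0 (by linarith) hp1 hp2⟩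
  · -- concavity
    intro r1 q1 r2 q2 θ h1 h2 hθ0 hθ1
    rcases eq_or_lt_of_le hθ0 with h0 | h0
    · rw [← h0]; norm_num
    rcases eq_or_lt_of_le hθ1 with h1' | h1'
    · rw [h1']; norm_num
    obtain ⟨hr1, hq1, hne1⟩ := h1
    obtain ⟨hr2, hq2, hne2⟩ := h2
    have key : ∀ a ∈ (fun p => IY Q1 p - IZ Q1 Q2 p) '' Feas Q1 φ r1 q1,
        ∀ b ∈ (fun p => IY Q1 p - IZ Q1 Q2 p) '' Feas Q1 φ r2 q2,
        θ * a + (1 - θ) * b ≤ Gam Q1 Q2 φ (θ * r1 + (1 - θ) * r2) (θ * q1 + (1 - θ) * q2) := by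
      rintro a ⟨p1, hp1, rfl⟩ b ⟨p2, hp2, rfl⟩
      show θ * (IY Q1 p1 - IZ Q1 Q2 p1) + (1 - θ) * (IY Q1 p2 - IZ Q1 Q2 p2) ≤ _
      have hfeas := mixFeas r1 q1 r2 q2 θ p1 p2 h0 h1' hp1 hp2
      have hk := Wyner.keyIneq Q1 Q2 hQ10 hQ11 hQ20 hQ21 p1 p2 hp1.1 hp2.1 hp1.2.1 hp2.2.1
        θ h0 h1'
      have hle : IY Q1 (fun x => θ * p1 x + (1 - θ) * p2 x)
          - IZ Q1 Q2 (fun x => θ * p1 x + (1 - θ) * p2 x) ≤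
          Gam Q1 Q2 φ (θ * r1 + (1 - θ) * r2) (θ * q1 + (1 - θ) * q2) :=
        le_csSup (bdd _ _) ⟨_, hfeas, rfl⟩
      linarith
    have hS1ne : ((fun p => IY Q1 p - IZ Q1 Q2 p) '' Feas Q1 φ r1 q1).Nonempty :=
      hne1.image _
    have hS2ne : ((fun p => IY Q1 p - IZ Q1 Q2 p) '' Feas Q1 φ r2 q2).Nonempty :=
      hne2.image _
    have step1 : ∀ a ∈ (fun p => IY Q1 p - IZ Q1 Q2 p) '' Feas Q1 φ r1 q1,
        θ * a + (1 - θ) * Gam Q1 Q2 φ r2 q2 ≤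
          Gam Q1 Q2 φ (θ * r1 + (1 - θ) * r2) (θ * q1 + (1 - θ) * q2) := by
      intro a ha
      have : Gam Q1 Q2 φ r2 q2 ≤
          (Gam Q1 Q2 φ (θ * r1 + (1 - θ) * r2) (θ * q1 + (1 - θ) * q2) - θ * a) / (1 - θ) := by
        refine csSup_le hS2ne fun b hb => ?_
        rw [le_div_iff₀ (by linarith : (0:ℝ) < 1 - θ)]
        have := key a ha b hb
        linarith
      have h2 := mul_le_mul_of_nonneg_left this (by linarith : (0:ℝ) ≤ 1 - θ)
      rw [mul_div_cancel₀ _ (by linarith : (1:ℝ) - θ ≠ 0)] at h2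
      linarith
    have : Gam Q1 Q2 φ r1 q1 ≤
        (Gam Q1 Q2 φ (θ * r1 + (1 - θ) * r2) (θ * q1 + (1 - θ) * q2)
          - (1 - θ) * Gam Q1 Q2 φ r2 q2) / θ := by
      refine csSup_le hS1ne fun a ha => ?_
      rw [le_div_iff₀ h0]
      have := step1 a ha
      linarith
    have h3 := mul_le_mul_of_nonneg_left this hθ0
    rw [mul_div_cancel₀ _ (ne_of_gt h0)] at h3
    linarith
  · -- nonincreasing in r
    intro r1 r2 q h1 h2 hr
    refine csSup_le_csSup (bdd r1 q) (h2.2.2.image _) (Set.image_mono ?_)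
    rintro p ⟨hn, hs, hir, hiq⟩
    exact ⟨hn, hs, le_trans hr hir, hiq⟩
  · -- nondecreasing in q
    intro r q1 q2 h1 h2 hq
    refine csSup_le_csSup (bdd r q2) (h1.2.2.image _) (Set.image_mono ?_)
    rintro p ⟨hn, hs, hir, hiq⟩
    exact ⟨hn, hs, hir, le_trans hiq hq⟩
end
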